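/- Let S = {(a 0; 0 b), (0 a; b 0) : a, b ∈ 𝔽₉^×} ≤ GL₂(𝔽₉). Then |S| = 128, the double coset space S \ GL₂(𝔽₉) / S has exactly 6 elements, with representatives the identity and the matrices (1 a; 1 1) for a ∈ {0, −1, z, 1+z, 1−z}, where z ∈ 𝔽₉ satisfies z² = 2. Moreover, for M = (a b; c d) ∈ GL₂(𝔽₉) with a, d ≠ 0, either SMS = S or SMS equals the double coset of (1 (bc)/(ad); 1 1). -/

import Mathlib

/-- The double coset of a matrix `M` by the set `S` of invertible monomial matrices. -/
def doubleCoset {F : Type*} [Field F] (S : Set (Matrix (Fin 2) (Fin 2) F))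
    (M : Matrix (Fin 2) (Fin 2) F) : Set (Matrix (Fin 2) (Fin 2) F) :=
  {N | ∃ s₁ ∈ S, ∃ s₂ ∈ S, N = s₁ * M * s₂}

namespace Stmt19

/-- The set of invertible monomial 2×2 matrices. -/
def Sm (F : Type*) [Field F] : Set (Matrix (Fin 2) (Fin 2) F) :=
  {M | ∃ a b : F, a ≠ 0 ∧ b ≠ 0 ∧ (M = !![a, 0; 0, b] ∨ M = !![0, a; b, 0])}

lemma m2_ext {F : Type*} {a b c d e f g h : F} :
    (!![a,b;c,d] = !![e,f;g,h]) ↔ (a=e ∧ b=f ∧ c=g ∧ d=h) := by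
  rw [← Matrix.ext_iff]
  constructor
  · intro H; exact ⟨H 0 0, H 0 1, H 1 0, H 1 1⟩
  · rintro ⟨rfl,rfl,rfl,rfl⟩ i j; rfl

variable {F : Type*} [Field F]

lemma one_mem : (1 : Matrix (Fin 2) (Fin 2) F) ∈ Sm F :=
  ⟨1, 1, one_ne_zero, one_ne_zero, Or.inl Matrix.one_fin_two⟩

lemma mul_mem {s t : Matrix (Fin 2) (Fin 2) F} (hs : s ∈ Sm F) (ht : t ∈ Sm F) :
    s * t ∈ Sm F := by
  obtain ⟨a, b, ha, hb, rfl | rfl⟩ := hs <;> obtain ⟨c, d, hc, hd, rfl | rfl⟩ := ht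
  · exact ⟨a*c, b*d, mul_ne_zero ha hc, mul_ne_zero hb hd,
      Or.inl (by rw [Matrix.mul_fin_two]; ring_nf)⟩
  · exact ⟨a*c, b*d, mul_ne_zero ha hc, mul_ne_zero hb hd,
      Or.inr (by rw [Matrix.mul_fin_two]; ring_nf)⟩
  · exact ⟨a*d, b*c, mul_ne_zero ha hd, mul_ne_zero hb hc,
      Or.inr (by rw [Matrix.mul_fin_two]; ring_nf)⟩
  · exact ⟨a*d, b*c, mul_ne_zero ha hd, mul_ne_zero hb hc,
      Or.inl (by rw [Matrix.mul_fin_two]; ring_nf)⟩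

lemma inv_mem {s : Matrix (Fin 2) (Fin 2) F} (hs : s ∈ Sm F) :
    ∃ s' ∈ Sm F, s' * s = 1 ∧ s * s' = 1 := by
  obtain ⟨a, b, ha, hb, rfl | rfl⟩ := hs
  · refine ⟨!![a⁻¹,0;0,b⁻¹], ⟨a⁻¹, b⁻¹, inv_ne_zero ha, inv_ne_zero hb, Or.inl rfl⟩, ?_, ?_⟩ <;>
      rw [Matrix.mul_fin_two, Matrix.one_fin_two, m2_ext] <;>
      refine ⟨?_, by ring, by ring, ?_⟩ <;> field_simp <;> ring
  · refine ⟨!![0,b⁻¹;a⁻¹,0], ⟨b⁻¹, a⁻¹, inv_ne_zero hb, inv_ne_zero ha, Or.inr rfl⟩, ?_, ?_⟩ <;>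
      rw [Matrix.mul_fin_two, Matrix.one_fin_two, m2_ext] <;>
      refine ⟨?_, by ring, by ring, ?_⟩ <;> field_simp <;> ring

lemma mem_dc_self (M : Matrix (Fin 2) (Fin 2) F) : M ∈ doubleCoset (Sm F) M :=
  ⟨1, one_mem, 1, one_mem, by simp⟩

lemma dc_eq_of {s₁ s₂ M : Matrix (Fin 2) (Fin 2) F} (hs₁ : s₁ ∈ Sm F) (hs₂ : s₂ ∈ Sm F) :
    doubleCoset (Sm F) (s₁ * M * s₂) = doubleCoset (Sm F) M := by
  obtain ⟨t₁, ht₁, ht₁l, ht₁r⟩ := inv_mem hs₁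
  obtain ⟨t₂, ht₂, ht₂l, ht₂r⟩ := inv_mem hs₂
  ext X
  constructor
  · rintro ⟨u₁, hu₁, u₂, hu₂, rfl⟩
    exact ⟨u₁ * s₁, mul_mem hu₁ hs₁, s₂ * u₂, mul_mem hs₂ hu₂, by noncomm_ring⟩
  · rintro ⟨u₁, hu₁, u₂, hu₂, rfl⟩
    refine ⟨u₁ * t₁, mul_mem hu₁ ht₁, t₂ * u₂, mul_mem ht₂ hu₂, ?_⟩
    calc u₁ * M * u₂ = u₁ * (t₁ * s₁) * M * (s₂ * t₂) * u₂ := by rw [ht₁l, ht₂r]; noncomm_ring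
    _ = u₁ * t₁ * (s₁ * M * s₂) * (t₂ * u₂) := by noncomm_ring

lemma dc_eq_of' {s₁ s₂ M N : Matrix (Fin 2) (Fin 2) F} (hs₁ : s₁ ∈ Sm F) (hs₂ : s₂ ∈ Sm F)
    (h : N = s₁ * M * s₂) : doubleCoset (Sm F) N = doubleCoset (Sm F) M := by
  rw [h]; exact dc_eq_of hs₁ hs₂

/-- the j-invariant of double cosets of `m t` -/
lemma j_inv {t t' : F} (h : !![1,t';1,1] ∈ doubleCoset (Sm F) !![1,t;1,1]) :
    t' = t ∨ t * t' = 1 := by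
  obtain ⟨s₁, ⟨p, q, hp, hq, h₁ | h₁⟩, s₂, ⟨r, s, hr, hs, h₂ | h₂⟩, heq⟩ := h <;>
    subst h₁ h₂ <;> rw [Matrix.mul_fin_two, Matrix.mul_fin_two, m2_ext] at heq <;>
    obtain ⟨e1, e2, e3, e4⟩ := heq
  · exact Or.inl (by linear_combination e2 - t*e4 - t*p*s*(e1-e3) - t*s*(q-p)*e1)
  · exact Or.inr (by linear_combination t*e2 - q*r*e1 + t*p*r*e3 - e4)
  · exact Or.inr (by linear_combination t*e2 - e1 + t*p*s*e3 - p*r*e4)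
  · exact Or.inl (by linear_combination e2 + p*r*e3 - t*q*r*e1 - t*e4)

/-- entries of members of the coset of `m t`, `t ≠ 0`, are nonzero in position (0,1) -/
lemma entry01_ne_zero {t : F} (ht : t ≠ 0) {X : Matrix (Fin 2) (Fin 2) F}
    (h : X ∈ doubleCoset (Sm F) !![1,t;1,1]) : X 0 1 ≠ 0 := by
  obtain ⟨s₁, ⟨p, q, hp, hq, h₁ | h₁⟩, s₂, ⟨r, s, hr, hs, h₂ | h₂⟩, heq⟩ := h <;>
    subst h₁ h₂ heq <;> rw [Matrix.mul_fin_two, Matrix.mul_fin_two] <;>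
    simp [mul_eq_zero, hp, hq, hr, hs, ht]

lemma dc_one : doubleCoset (Sm F) 1 = Sm F := by
  ext X
  constructor
  · rintro ⟨s₁, hs₁, s₂, hs₂, rfl⟩; rw [mul_one]; exact mul_mem hs₁ hs₂
  · intro hX; exact ⟨X, hX, 1, one_mem, by simp⟩

lemma m_not_mem (t : F) : !![1,t;1,1] ∉ Sm F := by
  rintro ⟨a, b, ha, hb, h | h⟩ <;> rw [m2_ext] at h
  · exact one_ne_zero h.2.2.1
  · exact one_ne_zero h.1

lemma dc_m_ne_one (t : F) : doubleCoset (Sm F) !![1,t;1,1] ≠ doubleCoset (Sm F) 1 := by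
  intro h
  have := mem_dc_self (F := F) !![1,t;1,1]
  rw [h, dc_one] at this
  exact m_not_mem t this

lemma dc_m_ne_m0 {t : F} (ht : t ≠ 0) :
    doubleCoset (Sm F) !![1,t;1,1] ≠ doubleCoset (Sm F) !![1,(0:F);1,1] := by
  intro h
  have := mem_dc_self (F := F) !![1,(0:F);1,1]
  rw [← h] at this
  have := entry01_ne_zero ht this
  simp at this

lemma dc_m_ne_m {t t' : F} (h1 : t' ≠ t) (h2 : t * t' ≠ 1) :
    doubleCoset (Sm F) !![1,t';1,1] ≠ doubleCoset (Sm F) !![1,t;1,1] := by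
  intro h
  have := mem_dc_self (F := F) !![1,t';1,1]
  rw [h] at this
  rcases j_inv this with h' | h'
  exacts [h1 h', h2 h']

lemma dc_m_inv {t t' : F} (ht : t ≠ 0) (htt' : t * t' = 1) :
    doubleCoset (Sm F) !![1,t';1,1] = doubleCoset (Sm F) !![1,t;1,1] := by
  have ht' : t' = t⁻¹ := by field_simp; linear_combination htt'
  refine dc_eq_of' (s₁ := !![t⁻¹,0;0,1]) (s₂ := !![0,1;1,0])
    ⟨t⁻¹, 1, inv_ne_zero ht, one_ne_zero, Or.inl rfl⟩
    ⟨1, 1, one_ne_zero, one_ne_zero, Or.inr rfl⟩ ?_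
  rw [Matrix.mul_fin_two, Matrix.mul_fin_two, m2_ext, ht']
  refine ⟨by field_simp; ring, by ring, by ring, by ring⟩

/-- main classification for matrices with nonzero diagonal -/
lemma main_class (a b c d : F) (ha : a ≠ 0) (hd : d ≠ 0) (hdet : (!![a,b;c,d]).det ≠ 0) :
    doubleCoset (Sm F) !![a,b;c,d] = doubleCoset (Sm F) 1 ∨
    doubleCoset (Sm F) !![a,b;c,d] = doubleCoset (Sm F) !![1, b*c/(a*d); 1, 1] := by
  rw [Matrix.det_fin_two_of] at hdet
  by_cases hb : b = 0
  · by_cases hc : c = 0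
    · subst hb hc
      refine Or.inl (dc_eq_of' (s₁ := !![a,0;0,d]) (s₂ := 1)
        ⟨a, d, ha, hd, Or.inl rfl⟩ one_mem ?_)
      rw [mul_one, mul_one]
    · subst hb
      right
      rw [zero_mul, zero_div]
      refine dc_eq_of' (s₁ := !![a,0;0,c]) (s₂ := !![1,0;0,d/c])
        ⟨a, c, ha, hc, Or.inl rfl⟩ ⟨1, d/c, one_ne_zero, div_ne_zero hd hc, Or.inl rfl⟩ ?_
      rw [Matrix.mul_fin_two, Matrix.mul_fin_two, m2_ext]
      refine ⟨by ring, by ring, by ring, by field_simp; ring⟩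
  · by_cases hc : c = 0
    · subst hc
      right
      rw [mul_zero, zero_div]
      refine dc_eq_of' (s₁ := !![0,1;d/b,0]) (s₂ := !![0,b;a,0])
        ⟨1, d/b, one_ne_zero, div_ne_zero hd hb, Or.inr rfl⟩
        ⟨b, a, hb, ha, Or.inr rfl⟩ ?_
      rw [Matrix.mul_fin_two, Matrix.mul_fin_two, m2_ext]
      refine ⟨by ring, by ring, by ring, by field_simp; ring⟩
    · right
      refine dc_eq_of' (s₁ := !![a,0;0,c]) (s₂ := !![1,0;0,d/c])
        ⟨a, c, ha, hc, Or.inl rfl⟩ ⟨1, d/c, one_ne_zero, div_ne_zero hd hc, Or.inl rfl⟩ ?_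
      rw [Matrix.mul_fin_two, Matrix.mul_fin_two, m2_ext]
      refine ⟨by ring, by field_simp; ring, by ring, by field_simp; ring⟩

lemma class3 (M : Matrix (Fin 2) (Fin 2) F) (hdet : M.det ≠ 0) :
    doubleCoset (Sm F) M = doubleCoset (Sm F) 1 ∨
    doubleCoset (Sm F) M = doubleCoset (Sm F) !![1,(0:F);1,1] ∨
    ∃ t : F, t ≠ 0 ∧ t ≠ 1 ∧ doubleCoset (Sm F) M = doubleCoset (Sm F) !![1,t;1,1] := by
  rw [Matrix.eta_fin_two M] at hdet ⊢
  set a := M 0 0; set b := M 0 1; set c := M 1 0; set d := M 1 1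
  clear_value a b c d
  rw [Matrix.det_fin_two_of] at hdet
  by_cases ha : a = 0
  · subst ha
    have hbc : b * c ≠ 0 := fun h => hdet (by linear_combination -h)
    obtain ⟨hb, hc⟩ := mul_ne_zero_iff.mp hbc
    by_cases hd : d = 0
    · subst hd
      left
      refine dc_eq_of' (s₁ := !![0,b;c,0]) (s₂ := 1) ⟨b, c, hb, hc, Or.inr rfl⟩ one_mem ?_
      rw [mul_one, mul_one]
    · have hswap : doubleCoset (Sm F) !![(0:F),b;c,d] = doubleCoset (Sm F) !![c,d;0,b] := by
        refine dc_eq_of' (s₁ := !![0,1;1,0]) (s₂ := 1)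
          ⟨1, 1, one_ne_zero, one_ne_zero, Or.inr rfl⟩ one_mem ?_
        rw [mul_one, Matrix.mul_fin_two, m2_ext]
        exact ⟨by ring, by ring, by ring, by ring⟩
      rw [hswap]
      rcases main_class c d 0 b hc hb
        (by rw [Matrix.det_fin_two_of]; intro h; exact hbc (by linear_combination h)) with h | h
      · exact Or.inl h
      · simp only [mul_zero, zero_mul, zero_div] at h
        exact Or.inr (Or.inl h)
  · by_cases hd : d = 0
    · subst hd
      have hbc : b * c ≠ 0 := fun h => hdet (by linear_combination -h)
      obtain ⟨hb, hc⟩ := mul_ne_zero_iff.mp hbc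
      have hswap : doubleCoset (Sm F) !![a,b;c,(0:F)] = doubleCoset (Sm F) !![c,0;a,b] := by
        refine dc_eq_of' (s₁ := !![0,1;1,0]) (s₂ := 1)
          ⟨1, 1, one_ne_zero, one_ne_zero, Or.inr rfl⟩ one_mem ?_
        rw [mul_one, Matrix.mul_fin_two, m2_ext]
        exact ⟨by ring, by ring, by ring, by ring⟩
      rw [hswap]
      rcases main_class c 0 a b hc hb
        (by rw [Matrix.det_fin_two_of]; intro h; exact hbc (by linear_combination h)) with h | h
      · exact Or.inl h
      · simp only [zero_mul, mul_zero, zero_div] at h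
        exact Or.inr (Or.inl h)
    · rcases main_class a b c d ha hd (by rw [Matrix.det_fin_two_of]; exact hdet) with h | h
      · exact Or.inl h
      · by_cases hb : b = 0
        · subst hb
          simp only [zero_mul, zero_div] at h
          exact Or.inr (Or.inl h)
        · by_cases hc : c = 0
          · subst hc
            simp only [mul_zero, zero_div] at h
            exact Or.inr (Or.inl h)
          · refine Or.inr (Or.inr ⟨b*c/(a*d),
              div_ne_zero (mul_ne_zero hb hc) (mul_ne_zero ha hd), ?_, h⟩)
            intro h1
            rw [div_eq_one_iff_eq (mul_ne_zero ha hd)] at h1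
            exact hdet (by linear_combination -h1)

lemma no_sqrt2 : ∀ w : ZMod 3, w^2 ≠ 2 := by decide

lemma three_eq_zero [Fintype F] (hF : Fintype.card F = 9) : (3:F) = 0 := by
  have h9 : ((9:ℕ) : F) = 0 := by rw [← hF]; exact Nat.cast_card_eq_zero F
  have h9' : (3:F) * 3 = 0 := by push_cast at h9; linear_combination h9
  rcases mul_eq_zero.mp h9' with h | h <;> exact h

lemma two_ne_zero' [Fintype F] (hF : Fintype.card F = 9) : (2:F) ≠ 0 := by
  intro h
  have : (1:F) = 0 := by linear_combination three_eq_zero hF - h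
  exact one_ne_zero this

lemma charP3 [Fintype F] (hF : Fintype.card F = 9) : CharP F 3 := by
  have : CharP F (ringChar F) := ringChar.charP F
  have hd : ringChar F ∣ 3 :=
    (CharP.cast_eq_zero_iff F (ringChar F) 3).mp (by exact_mod_cast three_eq_zero hF)
  rcases (Nat.prime_three).eq_one_or_self_of_dvd _ hd with h1 | h1
  · exact absurd h1 (CharP.ringChar_ne_one)
  · rw [← h1]; exact ringChar.charP F

lemma rep9 [Fintype F] (hF : Fintype.card F = 9) {z : F} (hz : z^2 = 2) (x : F) :
    ∃ c d : ZMod 3, x = ((c.val : ℕ) : F) + ((d.val : ℕ) : F) * z := by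
  haveI : CharP F 3 := charP3 hF
  haveI : Fact (Nat.Prime 3) := ⟨Nat.prime_three⟩
  set χ := ZMod.castHom (dvd_refl 3) F with hχ
  have hval : ∀ c : ZMod 3, ((c.val : ℕ) : F) = χ c := by
    intro c
    rw [hχ, ZMod.castHom_apply, ← ZMod.natCast_val]
  have hinj : Function.Injective χ := χ.injective
  set φ : ZMod 3 × ZMod 3 → F := fun p => χ p.1 + χ p.2 * z with hφ
  have hφinj : Function.Injective φ := by
    rintro ⟨c, d⟩ ⟨c', d'⟩ h
    simp only [hφ] at h
    by_cases hdd : d = d'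
    · subst hdd
      have : χ c = χ c' := by linear_combination h
      rw [hinj this]
    · exfalso
      have hne : χ (d' - d) ≠ 0 := fun hc => hdd (by
        have := hinj (hc.trans (map_zero χ).symm)
        linear_combination -this)
      have hzval : z = χ ((c - c') / (d' - d)) := by
        rw [map_div₀, eq_div_iff hne, map_sub, map_sub]
        linear_combination -h
      have h2 : ((c - c') / (d' - d))^2 = 2 := by
        apply hinj
        rw [map_pow, ← hzval, hz, map_ofNat]
      exact no_sqrt2 _ h2
  have hcard : Fintype.card (ZMod 3 × ZMod 3) = Fintype.card F := by simp [hF]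
  have hsurj : Function.Surjective φ :=
    ((Fintype.bijective_iff_injective_and_card φ).mpr ⟨hφinj, hcard⟩).2
  obtain ⟨⟨c, d⟩, hc⟩ := hsurj x
  exact ⟨c, d, by rw [hval, hval]; exact hc.symm⟩

lemma seven [Fintype F] (hF : Fintype.card F = 9) {z : F} (hz : z^2 = 2) (t : F)
    (h0 : t ≠ 0) (h1 : t ≠ 1) :
    t = -1 ∨ t = z ∨ t = -z ∨ t = 1+z ∨ t = 1-z ∨ t = -1+z ∨ t = -1-z := by
  have h3 : (3:F) = 0 := three_eq_zero hF
  obtain ⟨c, d, rfl⟩ := rep9 hF hz t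
  have hc3 : ∀ w : ZMod 3, w = 0 ∨ w = 1 ∨ w = 2 := by decide
  have v0 : ((0:ZMod 3)).val = 0 := rfl
  have v1 : ((1:ZMod 3)).val = 1 := rfl
  have v2 : ((2:ZMod 3)).val = 2 := rfl
  rcases hc3 c with rfl | rfl | rfl <;> rcases hc3 d with rfl | rfl | rfl <;>
    simp only [v0, v1, v2, Nat.cast_zero, Nat.cast_one, Nat.cast_ofNat] at h0 h1 ⊢
  · simp at h0
  · right; left; ring
  · right; right; left; linear_combination z * h3
  · simp at h1
  · right; right; right; left; ring
  · right; right; right; right; left; linear_combination z * h3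
  · left; linear_combination h3
  · right; right; right; right; right; left; linear_combination h3
  · right; right; right; right; right; right; linear_combination (1+z) * h3

lemma card_Sm [Fintype F] (hF : Fintype.card F = 9) : Nat.card (Sm F) = 128 := by
  classical
  let f : Fˣ × Fˣ × Bool → ↥(Sm F) := fun p =>
    if p.2.2 then ⟨!![0,(p.1:F);((p.2.1:F)),0], ⟨p.1, p.2.1, p.1.ne_zero, p.2.1.ne_zero, Or.inr rfl⟩⟩
    else ⟨!![(p.1:F),0;0,((p.2.1:F))], ⟨p.1, p.2.1, p.1.ne_zero, p.2.1.ne_zero, Or.inl rfl⟩⟩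
  have hbij : Function.Bijective f := by
    constructor
    · rintro ⟨u, v, s⟩ ⟨u', v', s'⟩ h
      cases s <;> cases s' <;>
        simp only [f, if_true, if_false, Bool.false_eq_true, Subtype.ext_iff, m2_ext] at h
      · obtain ⟨h1, -, -, h4⟩ := h
        exact Prod.ext (Units.ext h1) (Prod.ext (Units.ext h4) rfl)
      · exact absurd h.1 u.ne_zero
      · exact absurd h.1.symm u'.ne_zero
      · obtain ⟨-, h2, h3, -⟩ := h
        exact Prod.ext (Units.ext h2) (Prod.ext (Units.ext h3) rfl)
    · rintro ⟨M, hM⟩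
      obtain ⟨a, b, ha, hb, h | h⟩ := hM
      · exact ⟨(Units.mk0 a ha, Units.mk0 b hb, false), Subtype.ext (by simp [f]; exact h.symm)⟩
      · exact ⟨(Units.mk0 a ha, Units.mk0 b hb, true), Subtype.ext (by simp [f]; exact h.symm)⟩
  rw [← Nat.card_eq_of_bijective f hbij, Nat.card_prod, Nat.card_prod, Nat.card_units,
    Nat.card_eq_fintype_card, hF, Nat.card_eq_fintype_card, Fintype.card_bool]

theorem main (F : Type*) [Field F] [Fintype F] (hF : Fintype.card F = 9)
    (z : F) (hz : z ^ 2 = 2) :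
    Nat.card (Sm F) = 128 ∧
    Nat.card {C : Set (Matrix (Fin 2) (Fin 2) F) |
        ∃ M : Matrix (Fin 2) (Fin 2) F, M.det ≠ 0 ∧ C = doubleCoset (Sm F) M} = 6 ∧
    {C : Set (Matrix (Fin 2) (Fin 2) F) |
        ∃ M : Matrix (Fin 2) (Fin 2) F, M.det ≠ 0 ∧ C = doubleCoset (Sm F) M} =
      {doubleCoset (Sm F) 1, doubleCoset (Sm F) !![1,(0:F);1,1], doubleCoset (Sm F) !![1,-1;1,1],
        doubleCoset (Sm F) !![1,z;1,1], doubleCoset (Sm F) !![1,1+z;1,1],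
        doubleCoset (Sm F) !![1,1-z;1,1]} ∧
    (∀ a b c d : F, a ≠ 0 → d ≠ 0 → (!![a, b; c, d]).det ≠ 0 →
      doubleCoset (Sm F) !![a, b; c, d] = doubleCoset (Sm F) 1 ∨
      doubleCoset (Sm F) !![a, b; c, d] = doubleCoset (Sm F) !![1, b * c / (a * d); 1, 1]) := by
  have h3 : (3:F) = 0 := three_eq_zero hF
  have h2ne : (2:F) ≠ 0 := two_ne_zero' hF
  have hz0 : z ≠ 0 := by
    intro h; exact h2ne (by rw [← hz, h]; ring)
  have hz1 : z ≠ 1 := by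
    intro h; rw [h] at hz; exact one_ne_zero (α := F) (by linear_combination -hz)
  have hzm1 : z ≠ -1 := by
    intro h; rw [h] at hz; exact one_ne_zero (α := F) (by linear_combination -hz)
  have h1pz : (1:F) + z ≠ 0 := fun h => hzm1 (by linear_combination h)
  have h1mz : (1:F) - z ≠ 0 := fun h => hz1 (by linear_combination -h)
  have hset : {C : Set (Matrix (Fin 2) (Fin 2) F) |
        ∃ M : Matrix (Fin 2) (Fin 2) F, M.det ≠ 0 ∧ C = doubleCoset (Sm F) M} =
      {doubleCoset (Sm F) 1, doubleCoset (Sm F) !![1,(0:F);1,1], doubleCoset (Sm F) !![1,-1;1,1],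
        doubleCoset (Sm F) !![1,z;1,1], doubleCoset (Sm F) !![1,1+z;1,1],
        doubleCoset (Sm F) !![1,1-z;1,1]} := by
    ext C
    simp only [Set.mem_setOf_eq, Set.mem_insert_iff, Set.mem_singleton_iff]
    constructor
    · rintro ⟨M, hdet, rfl⟩
      rcases class3 M hdet with h | h | ⟨t, ht0, ht1, h⟩
      · exact Or.inl h
      · exact Or.inr (Or.inl h)
      · rcases seven hF hz t ht0 ht1 with rfl | rfl | rfl | rfl | rfl | rfl | rfl
        · exact Or.inr (Or.inr (Or.inl h))
        · exact Or.inr (Or.inr (Or.inr (Or.inl h)))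
        · refine Or.inr (Or.inr (Or.inr (Or.inl ?_)))
          rw [h]; exact dc_m_inv hz0 (by linear_combination -hz - h3)
        · exact Or.inr (Or.inr (Or.inr (Or.inr (Or.inl h))))
        · exact Or.inr (Or.inr (Or.inr (Or.inr (Or.inr h))))
        · refine Or.inr (Or.inr (Or.inr (Or.inr (Or.inl ?_))))
          rw [h]; exact dc_m_inv h1pz (by linear_combination hz)
        · refine Or.inr (Or.inr (Or.inr (Or.inr (Or.inr ?_))))
          rw [h]; exact dc_m_inv h1mz (by linear_combination hz)
    · rintro (rfl | rfl | rfl | rfl | rfl | rfl)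
      · exact ⟨1, by simp, rfl⟩
      · exact ⟨!![1,0;1,1], by rw [Matrix.det_fin_two_of]; norm_num, rfl⟩
      · exact ⟨!![1,-1;1,1], by
          rw [Matrix.det_fin_two_of]; intro hcon; exact h2ne (by linear_combination hcon), rfl⟩
      · exact ⟨!![1,z;1,1], by
          rw [Matrix.det_fin_two_of]; intro hcon; exact hz1 (by linear_combination -hcon), rfl⟩
      · exact ⟨!![1,1+z;1,1], by
          rw [Matrix.det_fin_two_of]; intro hcon; exact hz0 (by linear_combination -hcon), rfl⟩
      · exact ⟨!![1,1-z;1,1], by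
          rw [Matrix.det_fin_two_of]; intro hcon; exact hz0 (by linear_combination hcon), rfl⟩
  refine ⟨card_Sm hF, ?_, hset, fun a b c d ha hd hdet => main_class a b c d ha hd hdet⟩
  -- distinctness facts
  have ne1 : ∀ t : F, doubleCoset (Sm F) 1 ≠ doubleCoset (Sm F) !![1,t;1,1] :=
    fun t => (dc_m_ne_one t).symm
  have nem1 : (-1 : F) ≠ 0 := fun h => one_ne_zero (α := F) (by linear_combination -h)
  have d3z : doubleCoset (Sm F) !![1,(-1:F);1,1] ≠ doubleCoset (Sm F) !![1,z;1,1] :=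
    dc_m_ne_m (fun h => hzm1 (by linear_combination -h))
      (fun h => hzm1 (by linear_combination -h))
  have d35 : doubleCoset (Sm F) !![1,(-1:F);1,1] ≠ doubleCoset (Sm F) !![1,1+z;1,1] :=
    dc_m_ne_m (fun h => hz1 (by linear_combination -h - h3))
      (fun h => hz1 (by linear_combination -h - h3))
  have d36 : doubleCoset (Sm F) !![1,(-1:F);1,1] ≠ doubleCoset (Sm F) !![1,1-z;1,1] :=
    dc_m_ne_m (fun h => hzm1 (by linear_combination h + h3))
      (fun h => hzm1 (by linear_combination h + h3))
  have d45 : doubleCoset (Sm F) !![1,z;1,1] ≠ doubleCoset (Sm F) !![1,1+z;1,1] :=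
    dc_m_ne_m (fun h => one_ne_zero (α := F) (by linear_combination -h))
      (fun h => hzm1 (by linear_combination h - hz))
  have d46 : doubleCoset (Sm F) !![1,z;1,1] ≠ doubleCoset (Sm F) !![1,1-z;1,1] :=
    dc_m_ne_m (fun h => hzm1 (by linear_combination 2*h + (1-z)*h3))
      (fun h => hz0 (by linear_combination h + hz + h3))
  have d56 : doubleCoset (Sm F) !![1,1+z;1,1] ≠ doubleCoset (Sm F) !![1,1-z;1,1] := by
    refine dc_m_ne_m (fun h => ?_) (fun h => h2ne (by linear_combination -h - hz))
    have h2z : (2:F) * z = 0 := by linear_combination h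
    rcases mul_eq_zero.mp h2z with hh | hh
    exacts [h2ne hh, hz0 hh]
  rw [Nat.card_coe_set_eq, hset]
  rw [Set.ncard_insert_of_notMem (by
    simp only [Set.mem_insert_iff, Set.mem_singleton_iff]
    push_neg
    exact ⟨ne1 0, ne1 (-1), ne1 z, ne1 (1+z), ne1 (1-z)⟩) (Set.toFinite _)]
  rw [Set.ncard_insert_of_notMem (by
    simp only [Set.mem_insert_iff, Set.mem_singleton_iff]
    push_neg
    exact ⟨(dc_m_ne_m0 nem1).symm, (dc_m_ne_m0 hz0).symm,
      (dc_m_ne_m0 h1pz).symm, (dc_m_ne_m0 h1mz).symm⟩) (Set.toFinite _)]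
  rw [Set.ncard_insert_of_notMem (by
    simp only [Set.mem_insert_iff, Set.mem_singleton_iff]
    push_neg
    exact ⟨d3z, d35, d36⟩) (Set.toFinite _)]
  rw [Set.ncard_insert_of_notMem (by
    simp only [Set.mem_insert_iff, Set.mem_singleton_iff]
    push_neg
    exact ⟨d45, d46⟩) (Set.toFinite _)]
  rw [Set.ncard_pair d56]

end Stmt19

/-- Let `𝔽₉ = 𝔽₃[z]` with `z² = 2`, and let `S ≤ GL₂(𝔽₉)` be the subgroup
`{(a 0; 0 b), (0 a; b 0) : a, b ∈ 𝔽₉^×}`. Then `|S| = 128`, the double coset space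
`S \ GL₂(𝔽₉) / S` has exactly 6 elements represented by the identity and the matrices
`(1 a; 1 1)` for `a ∈ {0, −1, z, 1+z, 1−z}`; moreover for `M = (a b; c d)` with
`a, d ≠ 0`, either `SMS = S` (the coset of the identity) or `SMS` is the double coset
of `(1 (bc)/(ad); 1 1)`. -/
theorem stmt_19 (F : Type*) [Field F] [Fintype F] (hF : Fintype.card F = 9)
    (z : F) (hz : z ^ 2 = 2)
    (S : Set (Matrix (Fin 2) (Fin 2) F))
    (hS : S = {M | ∃ a b : F, a ≠ 0 ∧ b ≠ 0 ∧
      (M = !![a, 0; 0, b] ∨ M = !![0, a; b, 0])})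
    (m : F → Matrix (Fin 2) (Fin 2) F) (hm : m = fun a => !![1, a; 1, 1]) :
    Nat.card S = 128 ∧
    Nat.card {C : Set (Matrix (Fin 2) (Fin 2) F) |
        ∃ M : Matrix (Fin 2) (Fin 2) F, M.det ≠ 0 ∧ C = doubleCoset S M} = 6 ∧
    {C : Set (Matrix (Fin 2) (Fin 2) F) |
        ∃ M : Matrix (Fin 2) (Fin 2) F, M.det ≠ 0 ∧ C = doubleCoset S M} =
      {doubleCoset S 1, doubleCoset S (m 0), doubleCoset S (m (-1)), doubleCoset S (m z),
        doubleCoset S (m (1 + z)), doubleCoset S (m (1 - z))} ∧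
    (∀ a b c d : F, a ≠ 0 → d ≠ 0 → (!![a, b; c, d]).det ≠ 0 →
      doubleCoset S !![a, b; c, d] = doubleCoset S 1 ∨
      doubleCoset S !![a, b; c, d] = doubleCoset S (m (b * c / (a * d)))) := by
  subst hS hm
  exact Stmt19.main F hF z hz
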